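/- Existence of supersolutions with comparable moments: Assume the coefficient hypotheses (H1)–(H4). Let 0 < ρ < ρ_s and 0 < ω < z_s be given, and let (g_j)_{j≥1} be a non-negative, non-increasing sequence with g_j → 0 as j → ∞ and g_1 ≤ ρ. Then there exists an (ω,ρ)-supersolution (r_j)_{j≥1} to the associated Becker-Döring equations such that r_j → 0 as j → ∞, g_j ≤ r_j for all j ≥ 1, and moreover: for any 1 ≤ δ < z_s/ω and any positive, eventually non-decreasing sequence (φ_j)_{j≥1} satisfying limsup_{j→∞} φ_j/φ_{j−1} ≤ δ, there exists a constant C > 0, depending only on (φ_j), ρ, ω, δ and the coefficients (a_i), (b_i), such that ∑_{j≥1} φ_j r_j ≤ C (1 + ∑_{j≥1} φ_j g_j). -/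

import Mathlib

/-!
STATEMENT 8: Existence of supersolutions with comparable moments.

Sequences are indexed by `ℕ`; the physically relevant entries are those of
index `i ≥ 1` (index `0` is unused), and sums over `j ≥ 1` are written as
`∑' j : ℕ, f (j + 1)`.  Moments and the critical density are handled in
`[0,∞]`.  The condition `limsup_{j→∞} φ_j / φ_{j-1} ≤ δ` is expressed as:
for every `δ' > δ`, eventually `φ_{j+1} / φ_j ≤ δ'`.
-/

open Filter Set
open scoped Topology ENNReal

/-- Telescoping tail sum in `ℝ≥0∞` for a non-increasing sequence tending to 0. -/
lemma BD.tele_ofReal (u : ℕ → ℝ) (hmono : ∀ n, u (n + 1) ≤ u n)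
    (h0 : Tendsto u atTop (𝓝 0)) (j : ℕ) :
    ∑' i : ℕ, ENNReal.ofReal (u (j + i) - u (j + i + 1)) = ENNReal.ofReal (u j) := by
  have hnn : ∀ i : ℕ, 0 ≤ u (j + i) - u (j + i + 1) := fun i => sub_nonneg.2 (hmono _)
  have hs : HasSum (fun i : ℕ => u (j + i) - u (j + i + 1)) (u j) := by
    rw [hasSum_iff_tendsto_nat_of_nonneg hnn]
    have hps : ∀ n : ℕ, ∑ i ∈ Finset.range n, (u (j + i) - u (j + i + 1)) = u j - u (j + n) := by
      intro n
      have := Finset.sum_range_sub' (fun i => u (j + i)) n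
      simpa [add_assoc] using this
    simp only [hps]
    have h1 : Tendsto (fun n : ℕ => u (j + n)) atTop (𝓝 0) := by
      refine h0.comp ?_
      exact tendsto_atTop_mono (fun n => Nat.le_add_left n j) tendsto_id
    simpa using tendsto_const_nhds.sub h1
  rw [← hs.tsum_eq, ← ENNReal.ofReal_tsum_of_nonneg hnn hs.summable]

/-- Shift a tsum over `ℕ` when the first `k` terms vanish. -/
lemma BD.tsum_shift (f : ℕ → ℝ≥0∞) (k : ℕ) (h0 : ∀ i, i < k → f i = 0) :
    ∑' i : ℕ, f (i + k) = ∑' i : ℕ, f i := by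
  have h := Summable.sum_add_tsum_nat_add' (f := f) (k := k) ENNReal.summable
  rw [← h, Finset.sum_eq_zero (fun i hi => h0 i (Finset.mem_range.mp hi)), zero_add]

/-- Geometric tail with an offset indicator. -/
lemma BD.geom_ite (Θ : ℝ≥0∞) (k j : ℕ) :
    ∑' i : ℕ, (if k ≤ j + i then Θ ^ (j + i - k) else 0) = Θ ^ (j - k) * (1 - Θ)⁻¹ := by
  have h := BD.tsum_shift (fun i => if k ≤ j + i then Θ ^ (j + i - k) else 0) (k - j)
    (fun i hi => by simp only [if_neg (by omega : ¬ k ≤ j + i)])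
  rw [← h]
  have h2 : ∀ i : ℕ, (if k ≤ j + (i + (k - j)) then Θ ^ (j + (i + (k - j)) - k) else (0:ℝ≥0∞))
      = Θ ^ (j - k) * Θ ^ i := by
    intro i
    rw [if_pos (by omega), ← pow_add]
    congr 1
    omega
  simp only [h2]
  rw [ENNReal.tsum_mul_left, ENNReal.tsum_geometric]

/-- A uniform geometric comparison for a positive sequence whose ratios are
eventually bounded by `δ'`. -/
lemma BD.growth (φ : ℕ → ℝ) (δ' : ℝ) (hδ' : 1 ≤ δ')
    (hpos : ∀ j : ℕ, 1 ≤ j → 0 < φ j) (N₀ : ℕ)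
    (hrat : ∀ n : ℕ, N₀ ≤ n → φ (n + 1) ≤ δ' * φ n) :
    ∃ M : ℝ, 0 < M ∧ ∀ k j : ℕ, k ≤ j → φ (j + 1) ≤ M * δ' ^ (j - k) * φ (k + 1) := by
  have hδ0 : (0:ℝ) < δ' := lt_of_lt_of_le one_pos hδ'
  have hδpow : ∀ m : ℕ, (1:ℝ) ≤ δ' ^ m := fun m => one_le_pow₀ hδ'
  have hδpownn : ∀ m : ℕ, (0:ℝ) ≤ δ' ^ m := fun m => le_trans zero_le_one (hδpow m)
  have hpow : ∀ p m : ℕ, N₀ ≤ p → φ (p + m) ≤ δ' ^ m * φ p := by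
    intro p m hp
    induction m with
    | zero => simp
    | succ m ih =>
      have h1 : φ (p + m + 1) ≤ δ' * φ (p + m) := hrat (p + m) (by omega)
      have h2 : δ' * φ (p + m) ≤ δ' * (δ' ^ m * φ p) :=
        mul_le_mul_of_nonneg_left ih (le_of_lt hδ0)
      calc φ (p + (m + 1)) = φ (p + m + 1) := by ring_nf
        _ ≤ δ' * (δ' ^ m * φ p) := le_trans h1 h2
        _ = δ' ^ (m + 1) * φ p := by ring
  have hne : (Finset.range (N₀ + 1)).Nonempty := ⟨0, by simp⟩
  set A := (Finset.range (N₀ + 1)).sup' hne (fun i => φ (i + 1)) with hA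
  set B := (Finset.range (N₀ + 1)).inf' hne (fun i => φ (i + 1)) with hB
  have hBpos : 0 < B := by
    rw [hB, Finset.lt_inf'_iff]
    exact fun i _ => hpos (i + 1) (by omega)
  have hle_A : ∀ i : ℕ, i ≤ N₀ → φ (i + 1) ≤ A := fun i hi =>
    Finset.le_sup' (fun i => φ (i + 1)) (Finset.mem_range.mpr (by omega))
  have hB_le : ∀ i : ℕ, i ≤ N₀ → B ≤ φ (i + 1) := fun i hi =>
    Finset.inf'_le (fun i => φ (i + 1)) (Finset.mem_range.mpr (by omega))
  have hApos : 0 < A := lt_of_lt_of_le (hpos 1 le_rfl) (hle_A 0 (by omega))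
  refine ⟨max 1 (A / B), lt_of_lt_of_le one_pos (le_max_left _ _), ?_⟩
  intro k j hkj
  have hφk : 0 < φ (k + 1) := hpos _ (by omega)
  have hM1 : (1:ℝ) ≤ max 1 (A / B) := le_max_left _ _
  have hMAB : A / B ≤ max 1 (A / B) := le_max_right _ _
  have hABnn : 0 ≤ A / B := div_nonneg (le_of_lt hApos) (le_of_lt hBpos)
  by_cases hk : N₀ ≤ k
  · have h1 : φ (j + 1) ≤ δ' ^ (j - k) * φ (k + 1) := by
      have := hpow (k + 1) (j - k) (by omega)
      have he : k + 1 + (j - k) = j + 1 := by omega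
      rwa [he] at this
    calc φ (j + 1) ≤ δ' ^ (j - k) * φ (k + 1) := h1
      _ = 1 * (δ' ^ (j - k) * φ (k + 1)) := by ring
      _ ≤ max 1 (A / B) * (δ' ^ (j - k) * φ (k + 1)) :=
          mul_le_mul_of_nonneg_right hM1 (mul_nonneg (hδpownn _) (le_of_lt hφk))
      _ = max 1 (A / B) * δ' ^ (j - k) * φ (k + 1) := by ring
  · push_neg at hk
    have hBk : B ≤ φ (k + 1) := hB_le k (by omega)
    have hstep : A ≤ (A / B) * φ (k + 1) := by
      have : (A / B) * B ≤ (A / B) * φ (k + 1) := mul_le_mul_of_nonneg_left hBk hABnn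
      rwa [div_mul_cancel₀ A (ne_of_gt hBpos)] at this
    by_cases hj : j < N₀
    · have h1 : φ (j + 1) ≤ A := hle_A j (by omega)
      calc φ (j + 1) ≤ (A / B) * φ (k + 1) := le_trans h1 hstep
        _ ≤ max 1 (A / B) * φ (k + 1) := mul_le_mul_of_nonneg_right hMAB (le_of_lt hφk)
        _ = max 1 (A / B) * 1 * φ (k + 1) := by ring
        _ ≤ max 1 (A / B) * δ' ^ (j - k) * φ (k + 1) := by
            apply mul_le_mul_of_nonneg_right _ (le_of_lt hφk)
            exact mul_le_mul_of_nonneg_left (hδpow _) (le_trans zero_le_one hM1)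
    · push_neg at hj
      have hN1 : 1 ≤ N₀ := by omega
      have h1 : φ (j + 1) ≤ δ' ^ (j + 1 - N₀) * φ N₀ := by
        have := hpow N₀ (j + 1 - N₀) le_rfl
        have he : N₀ + (j + 1 - N₀) = j + 1 := by omega
        rwa [he] at this
      have hφN : φ N₀ ≤ A := by
        have := hle_A (N₀ - 1) (by omega)
        have he : N₀ - 1 + 1 = N₀ := by omega
        rwa [he] at this
      have hexp : δ' ^ (j + 1 - N₀) ≤ δ' ^ (j - k) :=
        pow_le_pow_right₀ hδ' (by omega)
      have hφN0 : 0 ≤ φ N₀ := le_of_lt (hpos N₀ hN1)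
      calc φ (j + 1) ≤ δ' ^ (j + 1 - N₀) * φ N₀ := h1
        _ ≤ δ' ^ (j - k) * A := by
            apply mul_le_mul hexp hφN hφN0 (hδpownn _)
        _ ≤ δ' ^ (j - k) * ((A / B) * φ (k + 1)) :=
            mul_le_mul_of_nonneg_left hstep (hδpownn _)
        _ = (A / B) * δ' ^ (j - k) * φ (k + 1) := by ring
        _ ≤ max 1 (A / B) * δ' ^ (j - k) * φ (k + 1) := by
            apply mul_le_mul_of_nonneg_right _ (le_of_lt hφk)
            exact mul_le_mul_of_nonneg_right hMAB (hδpownn _)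


/-- Hypothesis (H1): either `0 < a_i ≤ ā i^γ` for all `i ≥ 1`, some `ā > 0`
and some `0 ≤ γ < 1`, or `C₁ i ≤ a_i ≤ C₂ i` for all `i ≥ 1` and some
`0 < C₁ ≤ C₂`. -/
def BDH1 (a : ℕ → ℝ) (γ : ℝ) : Prop :=
  (0 ≤ γ ∧ γ < 1 ∧ ∃ abar : ℝ, 0 < abar ∧
      ∀ i : ℕ, 1 ≤ i → a i ≤ abar * (i : ℝ) ^ γ) ∨
  (γ = 1 ∧ ∃ C₁ C₂ : ℝ, 0 < C₁ ∧ C₁ ≤ C₂ ∧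
      ∀ i : ℕ, 1 ≤ i → C₁ * (i : ℝ) ≤ a i ∧ a i ≤ C₂ * (i : ℝ))

/-- An `(ω,ρ)`-supersolution of the associated Becker–Döring equations: a
non-negative sequence `(r_j)_{j ≥ 1}` with `r_1 ≥ ρ` and
`a_{j-1} ω (r_{j-1} - r_j) + b_j (r_{j+1} - r_j) ≤ 0` for all `j ≥ 2`. -/
def IsSupersolution (a b : ℕ → ℝ) (ω ρ : ℝ) (r : ℕ → ℝ) : Prop :=
  (∀ j : ℕ, 1 ≤ j → 0 ≤ r j) ∧ ρ ≤ r 1 ∧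
    ∀ j : ℕ, 2 ≤ j →
      a (j - 1) * ω * (r (j - 1) - r j) + b j * (r (j + 1) - r j) ≤ 0

/-- **Existence of supersolutions with comparable moments.**  Assume
(H1)–(H4), `0 < ρ < ρ_s`, `0 < ω < z_s`, and let `(g_j)_{j ≥ 1}` be a
non-negative non-increasing sequence tending to `0` with `g_1 ≤ ρ`.  Then
there exists an `(ω,ρ)`-supersolution `(r_j)_{j ≥ 1}` tending to `0` with
`g_j ≤ r_j` for all `j ≥ 1`, and such that for any `1 ≤ δ < z_s/ω` and any
positive, eventually non-decreasing sequence `(φ_j)_{j ≥ 1}` with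
`limsup_{j→∞} φ_j/φ_{j-1} ≤ δ` there is a constant `C > 0` with
`∑_{j ≥ 1} φ_j r_j ≤ C (1 + ∑_{j ≥ 1} φ_j g_j)`. -/

theorem exists_supersolution_with_comparable_moments
    (a b Q : ℕ → ℝ) (γ zs ρ ω : ℝ)
    (hapos : ∀ i : ℕ, 1 ≤ i → 0 < a i)
    (hbpos : ∀ i : ℕ, 2 ≤ i → 0 < b i)
    (hH1 : BDH1 a γ)
    (hH2 : ∃ bbar : ℝ, 0 < bbar ∧ ∀ i : ℕ, 1 ≤ i → b i ≤ bbar * a i)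
    (hQ1 : Q 1 = 1)
    (hQrec : ∀ i : ℕ, 1 ≤ i → Q (i + 1) = a i / b (i + 1) * Q i)
    (hzs : 0 < zs)
    (hH3 : Tendsto (fun i : ℕ => Q (i + 1) / Q i) atTop (𝓝 (1 / zs)))
    (hH4 : ∀ i : ℕ, 1 ≤ i → Q (i + 1) * zs ^ (i + 1) ≤ Q i * zs ^ i)
    (hρpos : 0 < ρ)
    (hsub : ENNReal.ofReal ρ
      < ∑' i : ℕ, ENNReal.ofReal (((i : ℝ) + 1) * Q (i + 1) * zs ^ (i + 1)))
    (hω0 : 0 < ω) (hωzs : ω < zs)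
    (g : ℕ → ℝ)
    (hg0 : ∀ j : ℕ, 1 ≤ j → 0 ≤ g j)
    (hgmono : ∀ j : ℕ, 1 ≤ j → g (j + 1) ≤ g j)
    (hgtend : Tendsto g atTop (𝓝 0))
    (hg1 : g 1 ≤ ρ) :
    ∃ r : ℕ → ℝ, IsSupersolution a b ω ρ r ∧
      Tendsto r atTop (𝓝 0) ∧
      (∀ j : ℕ, 1 ≤ j → g j ≤ r j) ∧
      ∀ δ : ℝ, 1 ≤ δ → δ < zs / ω →
        ∀ φ : ℕ → ℝ,
          (∀ j : ℕ, 1 ≤ j → 0 < φ j) →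
          (∃ N : ℕ, ∀ j : ℕ, N ≤ j → φ j ≤ φ (j + 1)) →
          (∀ δ' : ℝ, δ < δ' → ∀ᶠ j : ℕ in atTop, φ (j + 1) / φ j ≤ δ') →
          ∃ C : ℝ, 0 < C ∧
            (∑' j : ℕ, ENNReal.ofReal (φ (j + 1) * r (j + 1)))
              ≤ ENNReal.ofReal C *
                  (1 + ∑' j : ℕ, ENNReal.ofReal (φ (j + 1) * g (j + 1))) := by
  classical
  -- basic quantities
  set θ : ℝ := ω / zs with hθdef
  have hθ0 : 0 < θ := div_pos hω0 hzs
  have hθ1 : θ < 1 := (div_lt_one hzs).mpr hωzs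
  -- positivity of Q
  have hQpos : ∀ i : ℕ, 1 ≤ i → 0 < Q i := by
    intro i hi
    induction i with
    | zero => omega
    | succ n ih =>
      rcases Nat.eq_or_lt_of_le hi with h1 | h1
      · have : n = 0 := by omega
        subst this
        rw [hQ1]; norm_num
      · have hn : 1 ≤ n := by omega
        rw [hQrec n hn]
        have := hapos n hn
        have := hbpos (n + 1) (by omega)
        have := ih hn
        positivity
  -- the one-step contraction bound
  have hc : ∀ n : ℕ, ω * a (n + 1) / b (n + 2) ≤ θ := by
    intro n
    have hb2 : 0 < b (n + 2) := hbpos (n + 2) (by omega)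
    have hQn : 0 < Q (n + 1) := hQpos (n + 1) (by omega)
    have hab : a (n + 1) / b (n + 2) = Q (n + 2) / Q (n + 1) := by
      rw [hQrec (n + 1) (by omega)]
      field_simp
    have hzp : (0:ℝ) < zs ^ (n + 1) := pow_pos hzs _
    have h4 := hH4 (n + 1) (by omega)
    have hQle : Q (n + 2) * zs ≤ Q (n + 1) := by
      have : Q (n + 2) * zs ^ (n + 2) = (Q (n + 2) * zs) * zs ^ (n + 1) := by ring
      nlinarith [hH4 (n + 1) (by omega : 1 ≤ n + 1)]
    have : a (n + 1) / b (n + 2) ≤ 1 / zs := by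
      rw [hab, div_le_div_iff₀ hQn hzs]
      nlinarith
    calc ω * a (n + 1) / b (n + 2) = ω * (a (n + 1) / b (n + 2)) := by ring
      _ ≤ ω * (1 / zs) := mul_le_mul_of_nonneg_left this (le_of_lt hω0)
      _ = θ := by rw [hθdef]; ring
  have hcnn : ∀ n : ℕ, 0 ≤ ω * a (n + 1) / b (n + 2) := by
    intro n
    have := hapos (n + 1) (by omega)
    have := hbpos (n + 2) (by omega)
    positivity
  -- the sequence of decrements
  set D : ℕ → ℝ := fun n => Nat.rec ρ
    (fun n d => max (ω * a (n + 1) / b (n + 2) * d) (g (n + 2) - g (n + 3))) n with hDdef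
  have hD0 : D 0 = ρ := rfl
  have hDsucc : ∀ n : ℕ,
      D (n + 1) = max (ω * a (n + 1) / b (n + 2) * D n) (g (n + 2) - g (n + 3)) :=
    fun n => rfl
  have hDnn : ∀ n : ℕ, 0 ≤ D n := by
    intro n
    induction n with
    | zero => exact le_of_lt hρpos
    | succ n ih =>
      rw [hDsucc n]
      exact le_max_of_le_left (mul_nonneg (hcnn n) ih)
  have hDrec_ge : ∀ n : ℕ, ω * a (n + 1) / b (n + 2) * D n ≤ D (n + 1) :=
    fun n => (hDsucc n) ▸ le_max_left _ _
  have hDe : ∀ n : ℕ, g (n + 1) - g (n + 2) ≤ D n := by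
    intro n
    cases n with
    | zero =>
      rw [hD0]
      have h2 := hg0 2 (by omega)
      show g 1 - g 2 ≤ ρ
      nlinarith
    | succ n => exact (hDsucc n) ▸ le_max_right _ _
  have hDbound : ∀ n : ℕ, D (n + 1) ≤ θ * D n + (g (n + 2) - g (n + 3)) := by
    intro n
    rw [hDsucc n]
    have hge : 0 ≤ g (n + 2) - g (n + 3) := sub_nonneg.2 (hgmono (n + 2) (by omega))
    have hθD : 0 ≤ θ * D n := mul_nonneg (le_of_lt hθ0) (hDnn n)
    refine max_le ?_ (by linarith)
    have := mul_le_mul_of_nonneg_right (hc n) (hDnn n)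
    linarith
  -- pass to `ℝ≥0∞`
  set Θ : ℝ≥0∞ := ENNReal.ofReal θ with hΘdef
  have hΘ1 : Θ < 1 := by
    rw [hΘdef, ← ENNReal.ofReal_one]
    exact (ENNReal.ofReal_lt_ofReal_iff one_pos).mpr hθ1
  have hΘtop : (1 - Θ)⁻¹ ≠ ⊤ := by
    rw [ENNReal.inv_ne_top]
    intro h
    rw [tsub_eq_zero_iff_le] at h
    exact absurd hΘ1 (not_lt.mpr h)
  set E : ℕ → ℝ≥0∞ := fun k =>
    if k = 0 then ENNReal.ofReal ρ else ENNReal.ofReal (g (k + 1) - g (k + 2)) with hEdef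
  have hE0 : E 0 = ENNReal.ofReal ρ := rfl
  have hEsucc : ∀ k : ℕ, E (k + 1) = ENNReal.ofReal (g (k + 2) - g (k + 3)) := fun k => rfl
  -- shifted telescoping sums of g
  have hgmono' : ∀ n : ℕ, g (n + 1 + 1) ≤ g (n + 1) := fun n => hgmono (n + 1) (by omega)
  have hgtend' : Tendsto (fun n : ℕ => g (n + 1)) atTop (𝓝 0) := by
    refine hgtend.comp ?_
    exact tendsto_atTop_mono (fun n => by simpa using Nat.le_succ n) tendsto_id
  have htele : ∀ j : ℕ,
      ∑' i : ℕ, ENNReal.ofReal (g (j + i + 1) - g (j + i + 2)) = ENNReal.ofReal (g (j + 1)) := by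
    intro j
    have := BD.tele_ofReal (fun n => g (n + 1)) hgmono' hgtend' j
    simpa using this
  -- tail sums of E from index j+1 on
  have htailE : ∀ j : ℕ,
      (∑' k : ℕ, if j + 1 ≤ k then E k else 0) = ENNReal.ofReal (g (j + 2)) := by
    intro j
    have hsh := BD.tsum_shift (fun k => if j + 1 ≤ k then E k else 0) (j + 1)
      (fun i hi => if_neg (by omega))
    rw [← hsh]
    have hterm : ∀ i : ℕ, (if j + 1 ≤ i + (j + 1) then E (i + (j + 1)) else 0)
        = ENNReal.ofReal (g ((j + 1) + i + 1) - g ((j + 1) + i + 2)) := by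
      intro i
      rw [if_pos (by omega)]
      have h' : i + (j + 1) = (j + i) + 1 := by omega
      rw [h', hEsucc]
      have e1 : j + 1 + i + 1 = j + i + 2 := by omega
      have e2 : j + 1 + i + 2 = j + i + 3 := by omega
      rw [e1, e2]
    simp only [hterm]
    rw [htele (j + 1)]
  -- the fundamental pointwise bound on D
  have hDE : ∀ n : ℕ, ENNReal.ofReal (D n)
      ≤ ∑ k ∈ Finset.range (n + 1), Θ ^ (n - k) * E k := by
    intro n
    induction n with
    | zero =>
      rw [hD0, Finset.sum_range_one]
      simp [hE0]
    | succ n ih =>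
      have h1 : ENNReal.ofReal (D (n + 1))
          ≤ Θ * ENNReal.ofReal (D n) + E (n + 1) := by
        calc ENNReal.ofReal (D (n + 1))
            ≤ ENNReal.ofReal (θ * D n + (g (n + 2) - g (n + 3))) :=
              ENNReal.ofReal_le_ofReal (hDbound n)
          _ ≤ ENNReal.ofReal (θ * D n) + ENNReal.ofReal (g (n + 2) - g (n + 3)) :=
              ENNReal.ofReal_add_le
          _ = Θ * ENNReal.ofReal (D n) + E (n + 1) := by
              rw [hEsucc, hΘdef, ENNReal.ofReal_mul (le_of_lt hθ0)]
      have h2 : Θ * ENNReal.ofReal (D n)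
          ≤ Θ * ∑ k ∈ Finset.range (n + 1), Θ ^ (n - k) * E k :=
        mul_le_mul_right ih _
      have h3 : Θ * ∑ k ∈ Finset.range (n + 1), Θ ^ (n - k) * E k
          = ∑ k ∈ Finset.range (n + 1), Θ ^ (n + 1 - k) * E k := by
        rw [Finset.mul_sum]
        refine Finset.sum_congr rfl fun k hk => ?_
        rw [Finset.mem_range] at hk
        have : n + 1 - k = (n - k) + 1 := by omega
        rw [this, pow_succ]
        ring
      calc ENNReal.ofReal (D (n + 1)) ≤ Θ * ENNReal.ofReal (D n) + E (n + 1) := h1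
        _ ≤ ∑ k ∈ Finset.range (n + 1), Θ ^ (n + 1 - k) * E k + E (n + 1) := by
            rw [← h3]; exact add_le_add h2 le_rfl
        _ = ∑ k ∈ Finset.range (n + 2), Θ ^ (n + 1 - k) * E k := by
            have hss : ∑ k ∈ Finset.range (n + 2), Θ ^ (n + 1 - k) * E k
                = ∑ k ∈ Finset.range (n + 1), Θ ^ (n + 1 - k) * E k
                  + Θ ^ (n + 1 - (n + 1)) * E (n + 1) := Finset.sum_range_succ _ _
            rw [hss]
            simp
  have hDEtsum : ∀ m : ℕ, ENNReal.ofReal (D m)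
      ≤ ∑' k : ℕ, (if k ≤ m then Θ ^ (m - k) else 0) * E k := by
    intro m
    refine le_trans (hDE m) ?_
    have : ∀ k ∈ Finset.range (m + 1),
        Θ ^ (m - k) * E k = (if k ≤ m then Θ ^ (m - k) else 0) * E k := by
      intro k hk
      rw [Finset.mem_range] at hk
      rw [if_pos (by omega)]
    rw [Finset.sum_congr rfl this]
    exact ENNReal.sum_le_tsum _
  -- tail sums of D
  set R : ℕ → ℝ≥0∞ := fun n => ∑' i : ℕ, ENNReal.ofReal (D (n + i)) with hRdef
  have hRbound : ∀ j : ℕ, R j ≤ ∑' k : ℕ, Θ ^ (j - k) * (1 - Θ)⁻¹ * E k := by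
    intro j
    calc R j ≤ ∑' i : ℕ, ∑' k : ℕ, (if k ≤ j + i then Θ ^ (j + i - k) else 0) * E k :=
          ENNReal.tsum_le_tsum fun i => hDEtsum (j + i)
      _ = ∑' k : ℕ, ∑' i : ℕ, (if k ≤ j + i then Θ ^ (j + i - k) else 0) * E k :=
          ENNReal.tsum_comm
      _ = ∑' k : ℕ, Θ ^ (j - k) * (1 - Θ)⁻¹ * E k := by
          refine tsum_congr fun k => ?_
          rw [ENNReal.tsum_mul_right, BD.geom_ite]
  have hEsum : ∑' k : ℕ, E k ≠ ⊤ := by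
    have hsplit : ∑' k : ℕ, E k = E 0 + ∑' k : ℕ, E (k + 1) :=
      tsum_eq_zero_add' ENNReal.summable
    have h2 : ∑' k : ℕ, E (k + 1) = ENNReal.ofReal (g 2) := by
      have hterm : ∀ k : ℕ, E (k + 1) = ENNReal.ofReal (g (1 + k + 1) - g (1 + k + 2)) := by
        intro k
        rw [hEsucc]
        have e1 : 1 + k + 1 = k + 2 := by omega
        have e2 : 1 + k + 2 = k + 3 := by omega
        rw [e1, e2]
      simp only [hterm]
      have := htele 1
      simpa using this
    rw [hsplit, h2, hE0]
    exact ENNReal.add_ne_top.mpr ⟨ENNReal.ofReal_ne_top, ENNReal.ofReal_ne_top⟩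
  have hRfin : ∀ j : ℕ, R j ≠ ⊤ := by
    intro j
    refine ne_top_of_le_ne_top ?_ (hRbound j)
    have hble : ∀ k : ℕ, Θ ^ (j - k) * (1 - Θ)⁻¹ * E k ≤ (1 - Θ)⁻¹ * E k := by
      intro k
      have h1 : Θ ^ (j - k) ≤ 1 := pow_le_one' (le_of_lt hΘ1) _
      calc Θ ^ (j - k) * (1 - Θ)⁻¹ * E k ≤ 1 * (1 - Θ)⁻¹ * E k := by
            exact mul_le_mul_left (mul_le_mul_left h1 _) _
        _ = (1 - Θ)⁻¹ * E k := by rw [one_mul]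
    refine ne_top_of_le_ne_top ?_ (ENNReal.tsum_le_tsum hble)
    rw [ENNReal.tsum_mul_left]
    exact ENNReal.mul_ne_top hΘtop hEsum
  have hRrec : ∀ n : ℕ, R n = ENNReal.ofReal (D n) + R (n + 1) := by
    intro n
    have h1 : (∑' i : ℕ, ENNReal.ofReal (D (n + i)))
        = ENNReal.ofReal (D (n + 0)) + ∑' i : ℕ, ENNReal.ofReal (D (n + (i + 1))) :=
      tsum_eq_zero_add' ENNReal.summable
    have h2 : (∑' i : ℕ, ENNReal.ofReal (D (n + (i + 1))))
        = ∑' i : ℕ, ENNReal.ofReal (D ((n + 1) + i)) :=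
      tsum_congr fun i => by rw [show n + (i + 1) = (n + 1) + i from by omega]
    show (∑' i : ℕ, ENNReal.ofReal (D (n + i)))
        = ENNReal.ofReal (D n) + ∑' i : ℕ, ENNReal.ofReal (D ((n + 1) + i))
    rw [h1, h2, Nat.add_zero]
  -- the supersolution
  set r : ℕ → ℝ := fun j => (R (j - 1)).toReal with hrdef
  have hrval : ∀ j : ℕ, r (j + 1) = (R j).toReal := fun j => rfl
  have hrd : ∀ n : ℕ, r (n + 1) - r (n + 2) = D n := by
    intro n
    have h1 : r (n + 1) = D n + r (n + 2) := by
      rw [hrval n, hrval (n + 1), hRrec n,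
        ENNReal.toReal_add ENNReal.ofReal_ne_top (hRfin (n + 1)),
        ENNReal.toReal_ofReal (hDnn n)]
    linarith
  have hrnn : ∀ j : ℕ, 0 ≤ r j := fun j => ENNReal.toReal_nonneg
  have hr1 : ρ ≤ r 1 := by
    have h1 : ENNReal.ofReal ρ ≤ R 0 := by
      rw [hRrec 0, hD0]
      exact le_self_add
    have := ENNReal.toReal_mono (hRfin 0) h1
    rwa [ENNReal.toReal_ofReal (le_of_lt hρpos)] at this
  have hsuper : IsSupersolution a b ω ρ r := by
    refine ⟨fun j _ => hrnn j, hr1, ?_⟩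
    intro j hj
    obtain ⟨n, rfl⟩ : ∃ n : ℕ, j = n + 2 := ⟨j - 2, by omega⟩
    have e1 : n + 2 - 1 = n + 1 := by omega
    rw [e1]
    have h1 : r (n + 1) - r (n + 2) = D n := hrd n
    have h2 : r (n + 2) - r (n + 3) = D (n + 1) := hrd (n + 1)
    have h3 : ω * a (n + 1) / b (n + 2) * D n ≤ D (n + 1) := hDrec_ge n
    have hb2 : 0 < b (n + 2) := hbpos (n + 2) (by omega)
    have h4 : ω * a (n + 1) * D n ≤ b (n + 2) * D (n + 1) := by
      have := mul_le_mul_of_nonneg_left h3 (le_of_lt hb2)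
      calc ω * a (n + 1) * D n = b (n + 2) * (ω * a (n + 1) / b (n + 2) * D n) := by
            field_simp
        _ ≤ b (n + 2) * D (n + 1) := this
    have e2 : r (n + 2 + 1) - r (n + 2) = -(D (n + 1)) := by
      rw [← h2]; ring_nf
    rw [h1, e2]
    nlinarith [h4]
  -- r dominates g
  have hgr : ∀ j : ℕ, 1 ≤ j → g j ≤ r j := by
    intro j hj
    obtain ⟨m, rfl⟩ : ∃ m : ℕ, j = m + 1 := ⟨j - 1, by omega⟩
    have h1 : ENNReal.ofReal (g (m + 1)) ≤ R m := by
      rw [← htele m]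
      refine ENNReal.tsum_le_tsum fun i => ENNReal.ofReal_le_ofReal ?_
      have := hDe (m + i)
      have e1 : m + i + 1 = m + i + 1 := rfl
      calc g (m + i + 1) - g (m + i + 2) ≤ D (m + i) := hDe (m + i)
        _ = D (m + i) := rfl
    have := ENNReal.toReal_mono (hRfin m) h1
    rwa [ENNReal.toReal_ofReal (hg0 (m + 1) (by omega))] at this
  -- r tends to zero
  have hrtend : Tendsto r atTop (𝓝 0) := by
    have hRt : Tendsto (fun n : ℕ => R n) atTop (𝓝 0) := by
      have h1 : ∀ n : ℕ, R n = ∑' i : ℕ, ENNReal.ofReal (D (i + n)) := by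
        intro n
        exact tsum_congr fun i => by rw [Nat.add_comm n i]
      have h2 := ENNReal.tendsto_sum_nat_add (fun n => ENNReal.ofReal (D n)) (by
        have := hRfin 0
        have h3 : R 0 = ∑' i : ℕ, ENNReal.ofReal (D i) :=
          tsum_congr fun i => by rw [Nat.zero_add]
        rwa [h3] at this)
      simpa only [← h1] using h2
    have hto : Tendsto (fun n : ℕ => (R n).toReal) atTop (𝓝 0) := by
      have := (ENNReal.tendsto_toReal (by simp : (0:ℝ≥0∞) ≠ ⊤)).comp hRt
      exact this
    have hsub : Tendsto (fun j : ℕ => j - 1) atTop atTop :=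
      tendsto_sub_atTop_nat 1
    exact hto.comp hsub
  -- conclusion
  refine ⟨r, hsuper, hrtend, hgr, ?_⟩
  intro δ hδ1 hδω φ hφpos hφev hφrat
  -- choice of δ'
  set δ' : ℝ := (δ + zs / ω) / 2 with hδ'def
  have hzω : 0 < zs / ω := div_pos hzs hω0
  have hδ'gt : δ < δ' := by rw [hδ'def]; linarith
  have hδ'1 : 1 ≤ δ' := le_of_lt (lt_of_le_of_lt hδ1 hδ'gt)
  have hδ'0 : 0 < δ' := lt_of_lt_of_le one_pos hδ'1
  have hδ'lt : δ' < zs / ω := by rw [hδ'def]; linarith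
  have hθδ' : θ * δ' < 1 := by
    rw [hθdef]
    have h1 : δ' * ω < zs := by
      have := (lt_div_iff₀ hω0).mp hδ'lt
      linarith
    rw [div_mul_eq_mul_div, div_lt_one hzs]
    nlinarith
  -- eventual ratio bound
  have hev := hφrat δ' hδ'gt
  rw [eventually_atTop] at hev
  obtain ⟨N₁, hN₁⟩ := hev
  have hrat' : ∀ n : ℕ, max N₁ 1 ≤ n → φ (n + 1) ≤ δ' * φ n := by
    intro n hn
    have h1 := hN₁ n (le_trans (le_max_left _ _) hn)
    have h2 : 0 < φ n := hφpos n (le_trans (le_max_right _ _) hn)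
    calc φ (n + 1) = φ (n + 1) / φ n * φ n := by field_simp
      _ ≤ δ' * φ n := mul_le_mul_of_nonneg_right h1 (le_of_lt h2)
  obtain ⟨M, hM0, hMgrow⟩ := BD.growth φ δ' hδ'1 hφpos (max N₁ 1) hrat'
  -- ℝ≥0∞ versions
  set ψ : ℕ → ℝ≥0∞ := fun j => ENNReal.ofReal (φ j) with hψdef
  set Δ : ℝ≥0∞ := ENNReal.ofReal δ' with hΔdef
  set Mh : ℝ≥0∞ := ENNReal.ofReal M with hMhdef
  have hψgrow : ∀ k j : ℕ, k ≤ j → ψ (j + 1) ≤ Mh * Δ ^ (j - k) * ψ (k + 1) := by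
    intro k j hkj
    calc ψ (j + 1) ≤ ENNReal.ofReal (M * δ' ^ (j - k) * φ (k + 1)) :=
          ENNReal.ofReal_le_ofReal (hMgrow k j hkj)
      _ = Mh * Δ ^ (j - k) * ψ (k + 1) := by
          rw [ENNReal.ofReal_mul (mul_nonneg (le_of_lt hM0) (pow_nonneg (le_of_lt hδ'0) _)),
            ENNReal.ofReal_mul (le_of_lt hM0), ENNReal.ofReal_pow (le_of_lt hδ'0)]
  have hΔΘ1 : Δ * Θ < 1 := by
    rw [hΔdef, hΘdef, ← ENNReal.ofReal_mul (le_of_lt hδ'0), ← ENNReal.ofReal_one]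
    exact (ENNReal.ofReal_lt_ofReal_iff one_pos).mpr (by nlinarith)
  have hΔΘtop : (1 - Δ * Θ)⁻¹ ≠ ⊤ := by
    rw [ENNReal.inv_ne_top]
    intro h
    rw [tsub_eq_zero_iff_le] at h
    exact absurd hΔΘ1 (not_lt.mpr h)
  -- trivial case
  by_cases hSG : (∑' j : ℕ, ENNReal.ofReal (φ (j + 1) * g (j + 1))) = ⊤
  · refine ⟨1, one_pos, ?_⟩
    rw [hSG]
    simp
  -- main case
  have hψfact : ∀ j : ℕ, ENNReal.ofReal (φ (j + 1) * r (j + 1)) = ψ (j + 1) * R j := by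
    intro j
    rw [ENNReal.ofReal_mul (le_of_lt (hφpos (j + 1) (by omega))), hrval j,
      ENNReal.ofReal_toReal (hRfin j)]
  have hterm : ∀ j k : ℕ, ψ (j + 1) * (Θ ^ (j - k) * (1 - Θ)⁻¹ * E k)
      ≤ (1 - Θ)⁻¹ * ((if k ≤ j then (Δ * Θ) ^ (j - k) else 0) * (Mh * (ψ (k + 1) * E k))
          + ψ (j + 1) * (if j + 1 ≤ k then E k else 0)) := by
    intro j k
    by_cases hkj : k ≤ j
    · rw [if_pos hkj, if_neg (by omega), mul_zero, add_zero]
      calc ψ (j + 1) * (Θ ^ (j - k) * (1 - Θ)⁻¹ * E k)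
          ≤ Mh * Δ ^ (j - k) * ψ (k + 1) * (Θ ^ (j - k) * (1 - Θ)⁻¹ * E k) :=
            mul_le_mul_left (hψgrow k j hkj) _
        _ = (1 - Θ)⁻¹ * ((Δ * Θ) ^ (j - k) * (Mh * (ψ (k + 1) * E k))) := by
            rw [mul_pow]; ring
    · rw [if_neg hkj, if_pos (by omega), zero_mul, zero_add]
      have h0 : j - k = 0 := by omega
      rw [h0, pow_zero]
      refine le_of_eq ?_
      ring
  have hgeom : ∀ k : ℕ, (∑' j : ℕ, if k ≤ j then (Δ * Θ) ^ (j - k) else 0)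
      = (1 - Δ * Θ)⁻¹ := by
    intro k
    have := BD.geom_ite (Δ * Θ) k 0
    simp only [Nat.zero_add, Nat.zero_sub, pow_zero, one_mul] at this
    exact this
  have hchain : (∑' j : ℕ, ψ (j + 1) * R j)
      ≤ (1 - Θ)⁻¹ * ((∑' k : ℕ, (1 - Δ * Θ)⁻¹ * (Mh * (ψ (k + 1) * E k)))
          + ∑' j : ℕ, ψ (j + 1) * ENNReal.ofReal (g (j + 2))) := by
    calc ∑' j : ℕ, ψ (j + 1) * R j
        ≤ ∑' j : ℕ, ψ (j + 1) * ∑' k : ℕ, Θ ^ (j - k) * (1 - Θ)⁻¹ * E k :=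
          ENNReal.tsum_le_tsum fun j => mul_le_mul_right (hRbound j) _
      _ = ∑' j : ℕ, ∑' k : ℕ, ψ (j + 1) * (Θ ^ (j - k) * (1 - Θ)⁻¹ * E k) :=
          tsum_congr fun j => ENNReal.tsum_mul_left.symm
      _ ≤ ∑' j : ℕ, ∑' k : ℕ, (1 - Θ)⁻¹ *
            ((if k ≤ j then (Δ * Θ) ^ (j - k) else 0) * (Mh * (ψ (k + 1) * E k))
              + ψ (j + 1) * (if j + 1 ≤ k then E k else 0)) :=
          ENNReal.tsum_le_tsum fun j => ENNReal.tsum_le_tsum fun k => hterm j k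
      _ = (1 - Θ)⁻¹ * ∑' j : ℕ, ∑' k : ℕ,
            ((if k ≤ j then (Δ * Θ) ^ (j - k) else 0) * (Mh * (ψ (k + 1) * E k))
              + ψ (j + 1) * (if j + 1 ≤ k then E k else 0)) := by
          rw [← ENNReal.tsum_mul_left]
          exact tsum_congr fun j => ENNReal.tsum_mul_left
      _ = (1 - Θ)⁻¹ * ((∑' j : ℕ, ∑' k : ℕ,
              (if k ≤ j then (Δ * Θ) ^ (j - k) else 0) * (Mh * (ψ (k + 1) * E k)))
            + ∑' j : ℕ, ∑' k : ℕ, ψ (j + 1) * (if j + 1 ≤ k then E k else 0)) := by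
          congr 1
          rw [← ENNReal.tsum_add]
          exact tsum_congr fun j => ENNReal.tsum_add
      _ = (1 - Θ)⁻¹ * ((∑' k : ℕ, (1 - Δ * Θ)⁻¹ * (Mh * (ψ (k + 1) * E k)))
            + ∑' j : ℕ, ψ (j + 1) * ENNReal.ofReal (g (j + 2))) := by
          congr 2
          · rw [ENNReal.tsum_comm]
            refine tsum_congr fun k => ?_
            rw [ENNReal.tsum_mul_right, hgeom k]
          · refine tsum_congr fun j => ?_
            rw [ENNReal.tsum_mul_left, htailE j]
  -- finiteness of the two pieces
  have hSGshift : (∑' k : ℕ, ENNReal.ofReal (φ (k + 2) * g (k + 2)))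
      ≤ ∑' j : ℕ, ENNReal.ofReal (φ (j + 1) * g (j + 1)) := by
    have hsplit : (∑' j : ℕ, ENNReal.ofReal (φ (j + 1) * g (j + 1)))
        = ENNReal.ofReal (φ 1 * g 1)
          + ∑' j : ℕ, ENNReal.ofReal (φ (j + 1 + 1) * g (j + 1 + 1)) :=
      tsum_eq_zero_add' ENNReal.summable
    rw [hsplit]
    exact le_add_self
  have hkey : (∑' k : ℕ, ψ (k + 1) * E k) ≠ ⊤ := by
    have hsplit : (∑' k : ℕ, ψ (k + 1) * E k)
        = ψ 1 * E 0 + ∑' k : ℕ, ψ (k + 1 + 1) * E (k + 1) :=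
      tsum_eq_zero_add' ENNReal.summable
    have h2 : (∑' k : ℕ, ψ (k + 1 + 1) * E (k + 1))
        ≤ ∑' k : ℕ, ENNReal.ofReal (φ (k + 2) * g (k + 2)) := by
      refine ENNReal.tsum_le_tsum fun k => ?_
      rw [hEsucc k, ENNReal.ofReal_mul (le_of_lt (hφpos (k + 2) (by omega)))]
      refine mul_le_mul_right (ENNReal.ofReal_le_ofReal ?_) _
      have := hg0 (k + 3) (by omega)
      linarith
    have hE0top : E 0 ≠ ⊤ := by rw [hE0]; exact ENNReal.ofReal_ne_top
    rw [hsplit]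
    refine ENNReal.add_ne_top.mpr ⟨ENNReal.mul_ne_top ENNReal.ofReal_ne_top hE0top, ?_⟩
    exact ne_top_of_le_ne_top hSG (le_trans h2 hSGshift)
  have hP1fin : (∑' k : ℕ, (1 - Δ * Θ)⁻¹ * (Mh * (ψ (k + 1) * E k))) ≠ ⊤ := by
    rw [ENNReal.tsum_mul_left]
    refine ENNReal.mul_ne_top hΔΘtop ?_
    rw [ENNReal.tsum_mul_left]
    exact ENNReal.mul_ne_top ENNReal.ofReal_ne_top hkey
  have hP2fin : (∑' j : ℕ, ψ (j + 1) * ENNReal.ofReal (g (j + 2))) ≠ ⊤ := by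
    refine ne_top_of_le_ne_top hSG (ENNReal.tsum_le_tsum fun j => ?_)
    rw [ENNReal.ofReal_mul (le_of_lt (hφpos (j + 1) (by omega)))]
    refine mul_le_mul_right (ENNReal.ofReal_le_ofReal ?_) _
    exact hgmono (j + 1) (by omega)
  have hSReq : (∑' j : ℕ, ENNReal.ofReal (φ (j + 1) * r (j + 1)))
      = ∑' j : ℕ, ψ (j + 1) * R j := tsum_congr hψfact
  have hSRfin : (∑' j : ℕ, ENNReal.ofReal (φ (j + 1) * r (j + 1))) ≠ ⊤ := by
    rw [hSReq]
    refine ne_top_of_le_ne_top ?_ hchain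
    exact ENNReal.mul_ne_top hΘtop (ENNReal.add_ne_top.mpr ⟨hP1fin, hP2fin⟩)
  refine ⟨(∑' j : ℕ, ENNReal.ofReal (φ (j + 1) * r (j + 1))).toReal + 1, by positivity, ?_⟩
  calc (∑' j : ℕ, ENNReal.ofReal (φ (j + 1) * r (j + 1)))
      = ENNReal.ofReal ((∑' j : ℕ, ENNReal.ofReal (φ (j + 1) * r (j + 1))).toReal) :=
        (ENNReal.ofReal_toReal hSRfin).symm
    _ ≤ ENNReal.ofReal ((∑' j : ℕ, ENNReal.ofReal (φ (j + 1) * r (j + 1))).toReal + 1) :=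
        ENNReal.ofReal_le_ofReal (by linarith)
    _ = ENNReal.ofReal ((∑' j : ℕ, ENNReal.ofReal (φ (j + 1) * r (j + 1))).toReal + 1) * 1 :=
        (mul_one _).symm
    _ ≤ ENNReal.ofReal ((∑' j : ℕ, ENNReal.ofReal (φ (j + 1) * r (j + 1))).toReal + 1)
          * (1 + ∑' j : ℕ, ENNReal.ofReal (φ (j + 1) * g (j + 1))) :=
        mul_le_mul_right le_self_add _
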